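/- arXiv:2006.11274 — 7 statements merged into one kernel-verified Lean document; each statement's English description precedes it below -/
import Mathlib

section
/- Let S and A be nonempty finite sets, H ≥ 1, and let (P_h)_{h=1}^H be transition kernels and r = (r_h)_{h=1}^H, u = (u_h)_{h=1}^H be reward collections with u_h(s,a) ≥ 0 for all (s,a). Let Q_h : S × A → ℝ (h = 1,…,H) be arbitrary functions, set V_{H+1} ≡ 0, V_h(s) = max_{a∈A} Q_h(s,a), and let π be the greedy policy π_h(s) ∈ argmax_{a∈A} Q_h(s,a). Assume that for all h ∈ {1,…,H} and all (s,a) ∈ S × A: Q*_h(s,a,r) ≤ Q_h(s,a) ≤ r_h(s,a) + Σ_{s'∈S} P_h(s'|s,a) V_{h+1}(s') + 2 u_h(s,a). Then for every initial distribution μ on S: E_{s∼μ}[V*_1(s,r) − V^π_1(s,r)] ≤ 2 E_{s∼μ}[V^π_1(s,u)] ≤ 2 E_{s∼μ}[V*_1(s,u)]. -/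
/-!
STATEMENT 0 (deterministic core of Theorem 3.1): in a finite-horizon MDP, if the
estimated `Q`-functions are optimistic for the reward collection `r` and dominated by the
one-step Bellman backup plus `2 u_h`, then the greedy policy `π` satisfies
`E_{s∼μ}[V*_1(s,r) − V^π_1(s,r)] ≤ 2 E_{s∼μ}[V^π_1(s,u)] ≤ 2 E_{s∼μ}[V*_1(s,u)]`.

All value functions are characterized by their (backward) Bellman recursions.
-/
theorem stmt_0 {S A : Type*} [Fintype S] [Nonempty S] [Fintype A] [Nonempty A]
    (H : ℕ) (hH : 1 ≤ H)
    -- transition kernels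
    (P : ℕ → S → A → S → ℝ)
    (hP0 : ∀ h ∈ Finset.Icc 1 H, ∀ s a s', 0 ≤ P h s a s')
    (hP1 : ∀ h ∈ Finset.Icc 1 H, ∀ s a, ∑ s', P h s a s' = 1)
    -- reward collections r and u, with u nonnegative
    (r u : ℕ → S → A → ℝ)
    (hu0 : ∀ h ∈ Finset.Icc 1 H, ∀ s a, 0 ≤ u h s a)
    -- arbitrary Q functions and induced V with V_{H+1} ≡ 0, V_h = max_a Q_h
    (Q : ℕ → S → A → ℝ) (V : ℕ → S → ℝ)
    (hVend : ∀ s, V (H + 1) s = 0)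
    (hVdef : ∀ h ∈ Finset.Icc 1 H, ∀ s, V h s = ⨆ a, Q h s a)
    -- greedy policy π_h(s) ∈ argmax_a Q_h(s,a)
    (π : ℕ → S → A)
    (hπ : ∀ h ∈ Finset.Icc 1 H, ∀ s a, Q h s a ≤ Q h s (π h s))
    -- optimal value functions for reward r
    (Qstar : ℕ → S → A → ℝ) (Vstar : ℕ → S → ℝ)
    (hVstarEnd : ∀ s, Vstar (H + 1) s = 0)
    (hQstar : ∀ h ∈ Finset.Icc 1 H, ∀ s a,
      Qstar h s a = r h s a + ∑ s', P h s a s' * Vstar (h + 1) s')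
    (hVstar : ∀ h ∈ Finset.Icc 1 H, ∀ s, Vstar h s = ⨆ a, Qstar h s a)
    -- optimal value functions for reward u
    (QstarU : ℕ → S → A → ℝ) (VstarU : ℕ → S → ℝ)
    (hVstarUEnd : ∀ s, VstarU (H + 1) s = 0)
    (hQstarU : ∀ h ∈ Finset.Icc 1 H, ∀ s a,
      QstarU h s a = u h s a + ∑ s', P h s a s' * VstarU (h + 1) s')
    (hVstarU : ∀ h ∈ Finset.Icc 1 H, ∀ s, VstarU h s = ⨆ a, QstarU h s a)
    -- value functions of the greedy policy π, for rewards r and u respectively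
    (Vpi VpiU : ℕ → S → ℝ)
    (hVpiEnd : ∀ s, Vpi (H + 1) s = 0)
    (hVpi : ∀ h ∈ Finset.Icc 1 H, ∀ s,
      Vpi h s = r h s (π h s) + ∑ s', P h s (π h s) s' * Vpi (h + 1) s')
    (hVpiUEnd : ∀ s, VpiU (H + 1) s = 0)
    (hVpiU : ∀ h ∈ Finset.Icc 1 H, ∀ s,
      VpiU h s = u h s (π h s) + ∑ s', P h s (π h s) s' * VpiU (h + 1) s')
    -- sandwich assumption: Q*_h(s,a,r) ≤ Q_h(s,a) ≤ r_h + P_h V_{h+1} + 2 u_h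
    (hSandwich : ∀ h ∈ Finset.Icc 1 H, ∀ s a,
      Qstar h s a ≤ Q h s a ∧
      Q h s a ≤ r h s a + (∑ s', P h s a s' * V (h + 1) s') + 2 * u h s a)
    -- initial distribution μ
    (μ : S → ℝ) (hμ0 : ∀ s, 0 ≤ μ s) (hμ1 : ∑ s, μ s = 1) :
    (∑ s, μ s * (Vstar 1 s - Vpi 1 s)) ≤ 2 * (∑ s, μ s * VpiU 1 s) ∧
    2 * (∑ s, μ s * VpiU 1 s) ≤ 2 * (∑ s, μ s * VstarU 1 s) := by
  have bdd : ∀ (f : A → ℝ), BddAbove (Set.range f) := fun f =>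
    Set.Finite.bddAbove (Set.finite_range f)
  have key : ∀ n, ∀ h, H + 1 ≤ h + n → 1 ≤ h → h ≤ H + 1 → ∀ s,
      (V h s - Vpi h s ≤ 2 * VpiU h s) ∧ Vstar h s ≤ V h s ∧ VpiU h s ≤ VstarU h s := by
    intro n
    induction n with
    | zero =>
      intro h hle h1 h2 s
      have : h = H + 1 := le_antisymm h2 (by omega)
      subst this
      simp [hVend, hVpiEnd, hVstarEnd, hVpiUEnd, hVstarUEnd]
    | succ n ih =>
      intro h hle h1 h2 s
      rcases eq_or_lt_of_le h2 with heq | hlt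
      · subst heq; simp [hVend, hVpiEnd, hVstarEnd, hVpiUEnd, hVstarUEnd]
      · have hmem : h ∈ Finset.Icc 1 H := Finset.mem_Icc.mpr ⟨h1, by omega⟩
        have ih' := ih (h+1) (by omega) (by omega) (by omega)
        refine ⟨?_, ?_, ?_⟩
        · have hVle : V h s ≤ Q h s (π h s) := by
            rw [hVdef h hmem]; exact ciSup_le (hπ h hmem s)
          have hQle := (hSandwich h hmem s (π h s)).2
          have hsum : ∑ s', P h s (π h s) s' * V (h+1) s' ≤
              ∑ s', P h s (π h s) s' * (Vpi (h+1) s' + 2 * VpiU (h+1) s') := by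
            apply Finset.sum_le_sum
            intro s' _
            apply mul_le_mul_of_nonneg_left _ (hP0 h hmem s (π h s) s')
            have := (ih' s').1
            linarith
          have hVpieq := hVpi h hmem s
          have hVpiUeq := hVpiU h hmem s
          have hu := hu0 h hmem s (π h s)
          have hexp : ∑ s', P h s (π h s) s' * (Vpi (h+1) s' + 2 * VpiU (h+1) s') =
              (∑ s', P h s (π h s) s' * Vpi (h+1) s') +
                2 * ∑ s', P h s (π h s) s' * VpiU (h+1) s' := by
            rw [Finset.mul_sum, ← Finset.sum_add_distrib]
            apply Finset.sum_congr rfl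
            intro s' _; ring
          linarith
        · rw [hVdef h hmem, hVstar h hmem]
          exact ciSup_mono (bdd _) (fun a => (hSandwich h hmem s a).1)
        · rw [hVstarU h hmem]
          have hstep : VpiU h s ≤ QstarU h s (π h s) := by
            rw [hVpiU h hmem, hQstarU h hmem]
            have : ∑ s', P h s (π h s) s' * VpiU (h+1) s' ≤
                ∑ s', P h s (π h s) s' * VstarU (h+1) s' := by
              apply Finset.sum_le_sum
              intro s' _
              exact mul_le_mul_of_nonneg_left (ih' s').2.2 (hP0 h hmem s (π h s) s')
            linarith
          exact hstep.trans (le_ciSup (bdd _) (π h s))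
  have k1 := fun s => key (H + 1) 1 (by omega) le_rfl (by omega) s
  constructor
  · have h1 : ∑ s, μ s * (Vstar 1 s - Vpi 1 s) ≤ ∑ s, μ s * (2 * VpiU 1 s) := by
      apply Finset.sum_le_sum
      intro s _
      apply mul_le_mul_of_nonneg_left _ (hμ0 s)
      have h := k1 s
      linarith [h.1, h.2.1]
    have h2 : ∑ s, μ s * (2 * VpiU 1 s) = 2 * ∑ s, μ s * VpiU 1 s := by
      rw [Finset.mul_sum]
      apply Finset.sum_congr rfl
      intro s _; ring
    linarith
  · apply mul_le_mul_of_nonneg_left _ (by norm_num : (0:ℝ) ≤ 2)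
    apply Finset.sum_le_sum
    intro s _
    exact mul_le_mul_of_nonneg_left (k1 s).2.2 (hμ0 s)
end

section
/- Let S and A be nonempty finite sets, H ≥ 1, let (P_h)_{h=1}^H be transition kernels, and let r = (r_h)_{h=1}^H be rewards with r_h(s,a) ∈ [0,1] for all h, s, a. Let φ : S × A → ℝ^d be any feature map, let w_h ∈ ℝ^d and bonus functions u_h : S × A → [0,∞) for h = 1,…,H be given, and define backward: Q_{H+1} ≡ 0, V_{H+1} ≡ 0, Q_h(s,a) = min{⟨φ(s,a), w_h⟩ + r_h(s,a) + u_h(s,a), H}, V_h(s) = max_{a∈A} Q_h(s,a). Assume that for all h ∈ {1,…,H} and all (s,a) ∈ S × A: |⟨φ(s,a), w_h⟩ − Σ_{s'∈S} P_h(s'|s,a) V_{h+1}(s')| ≤ u_h(s,a). Then for all h and all (s,a): Q*_h(s,a,r) ≤ Q_h(s,a) ≤ r_h(s,a) + Σ_{s'∈S} P_h(s'|s,a) V_{h+1}(s') + 2 u_h(s,a). -/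
open Matrix

/-!
STATEMENT 1 (deterministic core of Lemma 3.3): in a finite-horizon MDP with rewards in
[0,1], if the planning-phase `Q`-estimates are defined by
`Q_h(s,a) = min{⟨φ(s,a), w_h⟩ + r_h(s,a) + u_h(s,a), H}` with `V_h(s) = max_a Q_h(s,a)`,
and `|⟨φ(s,a), w_h⟩ − Σ_{s'} P_h(s'|s,a) V_{h+1}(s')| ≤ u_h(s,a)` for all `h, s, a`, then
`Q*_h(s,a,r) ≤ Q_h(s,a) ≤ r_h(s,a) + Σ_{s'} P_h(s'|s,a) V_{h+1}(s') + 2 u_h(s,a)`.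
-/
theorem stmt_1 {S A : Type*} [Fintype S] [Nonempty S] [Fintype A] [Nonempty A]
    (H d : ℕ) (hH : 1 ≤ H)
    -- transition kernels
    (P : ℕ → S → A → S → ℝ)
    (hP0 : ∀ h ∈ Finset.Icc 1 H, ∀ s a s', 0 ≤ P h s a s')
    (hP1 : ∀ h ∈ Finset.Icc 1 H, ∀ s a, ∑ s', P h s a s' = 1)
    -- rewards in [0,1]
    (r : ℕ → S → A → ℝ)
    (hr : ∀ h ∈ Finset.Icc 1 H, ∀ s a, r h s a ∈ Set.Icc (0 : ℝ) 1)
    -- feature map, weight vectors and nonnegative bonus functions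
    (φ : S → A → Fin d → ℝ) (w : ℕ → Fin d → ℝ)
    (u : ℕ → S → A → ℝ)
    (hu0 : ∀ h ∈ Finset.Icc 1 H, ∀ s a, 0 ≤ u h s a)
    -- backward-defined estimates: Q_{H+1} ≡ 0, V_{H+1} ≡ 0,
    -- Q_h = min{⟨φ, w_h⟩ + r_h + u_h, H}, V_h = max_a Q_h
    (Q : ℕ → S → A → ℝ) (V : ℕ → S → ℝ)
    (hQend : ∀ s a, Q (H + 1) s a = 0)
    (hVend : ∀ s, V (H + 1) s = 0)
    (hQdef : ∀ h ∈ Finset.Icc 1 H, ∀ s a,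
      Q h s a = min (φ s a ⬝ᵥ w h + r h s a + u h s a) (H : ℝ))
    (hVdef : ∀ h ∈ Finset.Icc 1 H, ∀ s, V h s = ⨆ a, Q h s a)
    -- optimal value functions for reward r
    (Qstar : ℕ → S → A → ℝ) (Vstar : ℕ → S → ℝ)
    (hVstarEnd : ∀ s, Vstar (H + 1) s = 0)
    (hQstar : ∀ h ∈ Finset.Icc 1 H, ∀ s a,
      Qstar h s a = r h s a + ∑ s', P h s a s' * Vstar (h + 1) s')
    (hVstar : ∀ h ∈ Finset.Icc 1 H, ∀ s, Vstar h s = ⨆ a, Qstar h s a)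
    -- concentration assumption
    (hconc : ∀ h ∈ Finset.Icc 1 H, ∀ s a,
      |φ s a ⬝ᵥ w h - ∑ s', P h s a s' * V (h + 1) s'| ≤ u h s a) :
    ∀ h ∈ Finset.Icc 1 H, ∀ s a,
      Qstar h s a ≤ Q h s a ∧
      Q h s a ≤ r h s a + (∑ s', P h s a s' * V (h + 1) s') + 2 * u h s a := by
  intro h hh s a
  obtain ⟨hh1, hh2⟩ := Finset.mem_Icc.mp hh
  -- a helper: one-step argument
  have step : ∀ h ∈ Finset.Icc 1 H,
      (∀ s, Vstar (h + 1) s ≤ V (h + 1) s) →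
      (∀ s, Vstar (h + 1) s ≤ ((H - h : ℕ) : ℝ)) →
      ∀ s a, Qstar h s a ≤ Q h s a := by
    intro h hh ih1 ih2 s a
    obtain ⟨hh1, hh2⟩ := Finset.mem_Icc.mp hh
    rw [hQstar h hh, hQdef h hh]
    have hsum1 : ∑ s', P h s a s' * Vstar (h + 1) s' ≤ ∑ s', P h s a s' * V (h + 1) s' :=
      Finset.sum_le_sum fun s' _ =>
        mul_le_mul_of_nonneg_left (ih1 s') (hP0 h hh s a s')
    have hconc' := (abs_le.mp (hconc h hh s a)).1
    refine le_min ?_ ?_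
    · have : ∑ s', P h s a s' * V (h + 1) s' ≤ φ s a ⬝ᵥ w h + u h s a := by linarith
      linarith
    · have hsum2 : ∑ s', P h s a s' * Vstar (h + 1) s' ≤ ((H - h : ℕ) : ℝ) := by
        calc ∑ s', P h s a s' * Vstar (h + 1) s'
            ≤ ∑ s', P h s a s' * ((H - h : ℕ) : ℝ) :=
              Finset.sum_le_sum fun s' _ =>
                mul_le_mul_of_nonneg_left (ih2 s') (hP0 h hh s a s')
          _ = ((H - h : ℕ) : ℝ) := by rw [← Finset.sum_mul, hP1 h hh, one_mul]
      have hr1 := (hr h hh s a).2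
      have hcast : (1 : ℝ) + ((H - h : ℕ) : ℝ) ≤ (H : ℝ) := by
        have : 1 + (H - h) ≤ H := by omega
        calc (1 : ℝ) + ((H - h : ℕ) : ℝ) = ((1 + (H - h) : ℕ) : ℝ) := by push_cast; ring
          _ ≤ (H : ℝ) := Nat.cast_le.mpr this
      linarith
  -- key induction: Vstar (H+1-k) ≤ V (H+1-k) and Vstar (H+1-k) ≤ k
  have key : ∀ k, k ≤ H →
      (∀ s, Vstar (H + 1 - k) s ≤ V (H + 1 - k) s) ∧
      (∀ s, Vstar (H + 1 - k) s ≤ (k : ℝ)) := by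
    intro k
    induction k with
    | zero =>
      intro _
      simp only [Nat.sub_zero]
      exact ⟨fun s => by rw [hVstarEnd, hVend], fun s => by rw [hVstarEnd]; simp⟩
    | succ k ih =>
      intro hk
      have hk' : k ≤ H := Nat.le_of_succ_le hk
      obtain ⟨ih1, ih2⟩ := ih hk'
      have hidx : H + 1 - k = (H - k) + 1 := by omega
      rw [hidx] at ih1 ih2
      set g := H - k with hg
      have hgm : g ∈ Finset.Icc 1 H := Finset.mem_Icc.mpr ⟨by omega, by omega⟩
      have hidx2 : H + 1 - (k + 1) = g := by omega
      rw [hidx2]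
      have hHg : H - g = k := by omega
      have ih2' : ∀ s, Vstar (g + 1) s ≤ ((H - g : ℕ) : ℝ) := by
        intro s; rw [hHg]; exact ih2 s
      have hQle := step g hgm ih1 ih2' 
      have bddQ : ∀ s, BddAbove (Set.range fun a => Q g s a) := fun s =>
        (Set.finite_range _).bddAbove
      constructor
      · intro s
        rw [hVstar g hgm, hVdef g hgm]
        exact ciSup_le fun a => (hQle s a).trans (le_ciSup (bddQ s) a)
      · intro s
        rw [hVstar g hgm]
        refine ciSup_le fun a => ?_
        rw [hQstar g hgm]
        have hsum2 : ∑ s', P g s a s' * Vstar (g + 1) s' ≤ ((H - g : ℕ) : ℝ) := by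
          calc ∑ s', P g s a s' * Vstar (g + 1) s'
              ≤ ∑ s', P g s a s' * ((H - g : ℕ) : ℝ) :=
                Finset.sum_le_sum fun s' _ =>
                  mul_le_mul_of_nonneg_left (ih2' s') (hP0 g hgm s a s')
            _ = ((H - g : ℕ) : ℝ) := by rw [← Finset.sum_mul, hP1 g hgm, one_mul]
        have hr1 := (hr g hgm s a).2
        rw [hHg] at hsum2
        push_cast
        linarith
  constructor
  · -- optimism
    have hk : H - h ≤ H := Nat.sub_le _ _
    obtain ⟨k1, k2⟩ := key (H - h) hk
    have hidx : H + 1 - (H - h) = h + 1 := by omega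
    rw [hidx] at k1 k2
    have k2' : ∀ s, Vstar (h + 1) s ≤ ((H - h : ℕ) : ℝ) := k2
    exact step h hh k1 k2' s a
  · -- upper bound
    rw [hQdef h hh]
    have hconc' := (abs_le.mp (hconc h hh s a)).2
    have : φ s a ⬝ᵥ w h ≤ (∑ s', P h s a s' * V (h + 1) s') + u h s a := by linarith
    have := min_le_left (φ s a ⬝ᵥ w h + r h s a + u h s a) (H : ℝ)
    linarith
end

section
/- Let S and A be nonempty finite sets, H ≥ 1, let (P_h)_{h=1}^H be transition kernels, and let r = (r_h)_{h=1}^H be rewards with r_h(s,a) ∈ [0,1] for all h, s, a. Let φ : S × A → ℝ^d be any feature map, let w_h ∈ ℝ^d and bonus functions b_h : S × A → [0,∞) for h = 1,…,H be given, and define backward: V_{H+1} ≡ 0, Q_h(s,a) = min{r_h(s,a) + ⟨φ(s,a), w_h⟩ + b_h(s,a), H}, V_h(s) = max_{a∈A} Q_h(s,a). Assume that for all h ∈ {1,…,H} and all (s,a) ∈ S × A: Σ_{s'∈S} P_h(s'|s,a) V_{h+1}(s') ≤ ⟨φ(s,a), w_h⟩ + b_h(s,a). Then for all h ∈ {1,…,H}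 and all s ∈ S: V*_h(s,r) ≤ V_h(s). -/
open Matrix

/-!
STATEMENT 2 (deterministic core of the first part of Lemma 3.2): in a finite-horizon MDP
with rewards in [0,1], if the exploration-phase estimates are defined by
`Q_h(s,a) = min{r_h(s,a) + ⟨φ(s,a), w_h⟩ + b_h(s,a), H}` with `V_{H+1} ≡ 0` and
`V_h(s) = max_a Q_h(s,a)`, and the one-step backup is dominated:
`Σ_{s'} P_h(s'|s,a) V_{h+1}(s') ≤ ⟨φ(s,a), w_h⟩ + b_h(s,a)`, then the estimates are
optimistic: `V*_h(s,r) ≤ V_h(s)` for all `h ∈ {1,…,H}`, `s ∈ S`.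
-/
theorem stmt_2 {S A : Type*} [Fintype S] [Nonempty S] [Fintype A] [Nonempty A]
    (H d : ℕ) (hH : 1 ≤ H)
    -- transition kernels
    (P : ℕ → S → A → S → ℝ)
    (hP0 : ∀ h ∈ Finset.Icc 1 H, ∀ s a s', 0 ≤ P h s a s')
    (hP1 : ∀ h ∈ Finset.Icc 1 H, ∀ s a, ∑ s', P h s a s' = 1)
    -- rewards in [0,1]
    (r : ℕ → S → A → ℝ)
    (hr : ∀ h ∈ Finset.Icc 1 H, ∀ s a, r h s a ∈ Set.Icc (0 : ℝ) 1)
    -- feature map, weight vectors and nonnegative bonus functions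
    (φ : S → A → Fin d → ℝ) (w : ℕ → Fin d → ℝ)
    (b : ℕ → S → A → ℝ)
    (hb0 : ∀ h ∈ Finset.Icc 1 H, ∀ s a, 0 ≤ b h s a)
    -- backward-defined estimates
    (Q : ℕ → S → A → ℝ) (V : ℕ → S → ℝ)
    (hVend : ∀ s, V (H + 1) s = 0)
    (hQdef : ∀ h ∈ Finset.Icc 1 H, ∀ s a,
      Q h s a = min (r h s a + φ s a ⬝ᵥ w h + b h s a) (H : ℝ))
    (hVdef : ∀ h ∈ Finset.Icc 1 H, ∀ s, V h s = ⨆ a, Q h s a)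
    -- optimal value functions for reward r
    (Qstar : ℕ → S → A → ℝ) (Vstar : ℕ → S → ℝ)
    (hVstarEnd : ∀ s, Vstar (H + 1) s = 0)
    (hQstar : ∀ h ∈ Finset.Icc 1 H, ∀ s a,
      Qstar h s a = r h s a + ∑ s', P h s a s' * Vstar (h + 1) s')
    (hVstar : ∀ h ∈ Finset.Icc 1 H, ∀ s, Vstar h s = ⨆ a, Qstar h s a)
    -- domination assumption
    (hdom : ∀ h ∈ Finset.Icc 1 H, ∀ s a,
      (∑ s', P h s a s' * V (h + 1) s') ≤ φ s a ⬝ᵥ w h + b h s a) :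
    ∀ h ∈ Finset.Icc 1 H, ∀ s, Vstar h s ≤ V h s := by
  have key : ∀ n, ∀ h, h + n = H + 1 → 1 ≤ h → ∀ s,
      Vstar h s ≤ V h s ∧ Vstar h s ≤ (H : ℝ) + 1 - h := by
    intro n
    induction n with
    | zero =>
      intro h hhn _ s
      have hh : h = H + 1 := by omega
      subst hh
      constructor
      · rw [hVstarEnd, hVend]
      · rw [hVstarEnd]; push_cast; linarith
    | succ n ih =>
      intro h hhn hh1 s
      have hmem : h ∈ Finset.Icc 1 H := Finset.mem_Icc.2 ⟨hh1, by omega⟩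
      have ih' := ih (h + 1) (by omega) (by omega)
      have hQle : ∀ a, Qstar h s a ≤ Q h s a ∧ Qstar h s a ≤ (H : ℝ) + 1 - h := by
        intro a
        rw [hQstar h hmem, hQdef h hmem]
        have hsum1 : (∑ s', P h s a s' * Vstar (h + 1) s')
            ≤ ∑ s', P h s a s' * V (h + 1) s' := by
          apply Finset.sum_le_sum
          intro s' _
          exact mul_le_mul_of_nonneg_left (ih' s').1 (hP0 h hmem s a s')
        have hsum2 : (∑ s', P h s a s' * Vstar (h + 1) s')
            ≤ ∑ s', P h s a s' * ((H : ℝ) + 1 - (h + 1)) := by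
          apply Finset.sum_le_sum
          intro s' _
          have := (ih' s').2
          push_cast at this ⊢
          exact mul_le_mul_of_nonneg_left (by linarith) (hP0 h hmem s a s')
        have hsum2' : (∑ s', P h s a s' * Vstar (h + 1) s') ≤ (H : ℝ) + 1 - (h + 1) := by
          calc (∑ s', P h s a s' * Vstar (h + 1) s')
              ≤ ∑ s', P h s a s' * ((H : ℝ) + 1 - (h + 1)) := hsum2
            _ = (∑ s', P h s a s') * ((H : ℝ) + 1 - (h + 1)) := by
                rw [Finset.sum_mul]
            _ = (H : ℝ) + 1 - (h + 1) := by rw [hP1 h hmem s a, one_mul]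
        have hr' := hr h hmem s a
        have hhH : (h : ℝ) ≥ 1 := by exact_mod_cast hh1
        push_cast at hsum2'
        constructor
        · apply le_min
          · have := hdom h hmem s a
            linarith
          · linarith [hr'.2]
        · linarith [hr'.2]
      have hbdd : BddAbove (Set.range (Q h s)) := Set.Finite.bddAbove (Set.finite_range _)
      constructor
      · rw [hVstar h hmem, hVdef h hmem]
        exact ciSup_mono hbdd fun a => (hQle a).1
      · rw [hVstar h hmem]
        exact ciSup_le fun a => (hQle a).2
  intro h hh s
  have hm := Finset.mem_Icc.1 hh
  exact (key (H + 1 - h) h (by omega) hm.1 s).1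
end

section
/- Let S and A be nonempty finite sets, H ≥ 1, and let P_h : S × A → S (h = 1,…,H) be deterministic transition functions. Let s*_1,…,s*_H ∈ S and a*_1,…,a*_H ∈ A satisfy s*_{h+1} = P_h(s*_h, a*_h) for 1 ≤ h ≤ H−1. Let Q_h : S × A → ℝ (h = 1,…,H) satisfy Q_h(s*_h, a*_h) = 1/2 and |Q_h(s,a)| ≤ 0.005 for every (s,a) ≠ (s*_h, a*_h). Define rewards by r_H(s,a) := Q_H(s,a) and, for h < H, r_h(s,a) := Q_h(s,a) − max_{a'∈A} Q_{h+1}(P_h(s,a), a'). Then: (i) the optimal value from s*_1 is V*_1(s*_1) = 1/2, attained by any policy π with π_h(s*_h) = a*_h for all h; (ii) every policy π with π_h(s*_h) ≠ a*_h for some h ∈ {1,…,H} satisfies V^π_1(s*_1) ≤ 0.005; in particular no such policy is 0.1-optimal from s*_1. -/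
/-!
STATEMENT 8 (uniqueness of near-optimal policies in the hard instance, Theorem 4.1):
in a deterministic system with a hidden trajectory `(s*_h, a*_h)` and functions `Q_h` with
`Q_h(s*_h, a*_h) = 1/2` and `|Q_h(s,a)| ≤ 0.005` elsewhere, with rewards `r_H = Q_H` and
`r_h(s,a) = Q_h(s,a) − max_{a'} Q_{h+1}(P_h(s,a), a')` for `h < H`:
(i) `V*_1(s*_1) = 1/2`, attained by any policy `π` with `π_h(s*_h) = a*_h` for all `h`;
(ii) every policy `π` with `π_h(s*_h) ≠ a*_h` for some `h` has `V^π_1(s*_1) ≤ 0.005`;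
in particular no such policy is `0.1`-optimal from `s*_1`.
-/
theorem stmt_8 {S A : Type*} [Fintype S] [Nonempty S] [Fintype A] [Nonempty A]
    (H : ℕ) (hH : 1 ≤ H)
    -- deterministic transition functions
    (P : ℕ → S → A → S)
    -- the hidden optimal trajectory
    (sstar : ℕ → S) (astar : ℕ → A)
    (hstar : ∀ h, 1 ≤ h → h + 1 ≤ H → sstar (h + 1) = P h (sstar h) (astar h))
    -- the prescribed Q functions
    (Q : ℕ → S → A → ℝ)
    (hQstarpath : ∀ h ∈ Finset.Icc 1 H, Q h (sstar h) (astar h) = 1 / 2)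
    (hQsmall : ∀ h ∈ Finset.Icc 1 H, ∀ s a,
      (s, a) ≠ (sstar h, astar h) → |Q h s a| ≤ 0.005)
    -- the rewards defined from Q
    (r : ℕ → S → A → ℝ)
    (hrH : ∀ s a, r H s a = Q H s a)
    (hrlt : ∀ h, 1 ≤ h → h < H → ∀ s a,
      r h s a = Q h s a - ⨆ a', Q (h + 1) (P h s a) a')
    -- optimal value functions of the deterministic system (S, A, P, r, H)
    (Qopt : ℕ → S → A → ℝ) (Vopt : ℕ → S → ℝ)
    (hVoptEnd : ∀ s, Vopt (H + 1) s = 0)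
    (hQopt : ∀ h ∈ Finset.Icc 1 H, ∀ s a,
      Qopt h s a = r h s a + Vopt (h + 1) (P h s a))
    (hVopt : ∀ h ∈ Finset.Icc 1 H, ∀ s, Vopt h s = ⨆ a, Qopt h s a) :
    -- (i) the optimal value from s*_1 is 1/2 ...
    Vopt 1 (sstar 1) = 1 / 2 ∧
    -- ... attained by any policy following the hidden trajectory
    (∀ (π : ℕ → S → A) (Vpi : ℕ → S → ℝ),
      (∀ h ∈ Finset.Icc 1 H, π h (sstar h) = astar h) →
      (∀ s, Vpi (H + 1) s = 0) →
      (∀ h ∈ Finset.Icc 1 H, ∀ s,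
        Vpi h s = r h s (π h s) + Vpi (h + 1) (P h s (π h s))) →
      Vpi 1 (sstar 1) = Vopt 1 (sstar 1)) ∧
    -- (ii) any deviating policy has value at most 0.005, hence is not 0.1-optimal
    (∀ (π : ℕ → S → A) (Vpi : ℕ → S → ℝ),
      (∃ h ∈ Finset.Icc 1 H, π h (sstar h) ≠ astar h) →
      (∀ s, Vpi (H + 1) s = 0) →
      (∀ h ∈ Finset.Icc 1 H, ∀ s,
        Vpi h s = r h s (π h s) + Vpi (h + 1) (P h s (π h s))) →
      Vpi 1 (sstar 1) ≤ 0.005 ∧ Vpi 1 (sstar 1) < Vopt 1 (sstar 1) - 0.1) := by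
  have hsup : ∀ h, 1 ≤ h → h ≤ H → (⨆ a, Q h (sstar h) a) = 1 / 2 := by
    intro h h1 h2
    have hm : h ∈ Finset.Icc 1 H := Finset.mem_Icc.2 ⟨h1, h2⟩
    apply le_antisymm
    · apply ciSup_le
      intro a
      by_cases ha : a = astar h
      · rw [ha, hQstarpath h hm]
      · have hb := abs_le.1 (hQsmall h hm (sstar h) a (by simp [ha]))
        have : (0.005 : ℝ) ≤ 1 / 2 := by norm_num
        linarith [hb.2]
    · have := le_ciSup (Finite.bddAbove_range (Q h (sstar h))) (astar h)
      rwa [hQstarpath h hm] at this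
  -- Vopt h = sup_a Q h · a
  have key : ∀ d h, 1 ≤ h → h + d = H → ∀ s, Vopt h s = ⨆ a, Q h s a := by
    intro d
    induction d with
    | zero =>
      intro h h1 hEq s
      have hhH : h = H := by omega
      subst hhH
      have hm : h ∈ Finset.Icc 1 h := Finset.mem_Icc.2 ⟨h1, le_rfl⟩
      rw [hVopt h hm s]
      exact iSup_congr fun a => by rw [hQopt h hm s a, hrH, hVoptEnd, add_zero]
    | succ d ih =>
      intro h h1 hEq s
      have hlt : h < H := by omega
      have hm : h ∈ Finset.Icc 1 H := Finset.mem_Icc.2 ⟨h1, hlt.le⟩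
      rw [hVopt h hm s]
      refine iSup_congr fun a => ?_
      rw [hQopt h hm s a, hrlt h h1 hlt s a,
        ih (h + 1) (by omega) (by omega) (P h s a)]
      ring
  have hV1 : Vopt 1 (sstar 1) = 1 / 2 := by
    rw [key (H - 1) 1 le_rfl (by omega) (sstar 1), hsup 1 le_rfl hH]
  refine ⟨hV1, ?_, ?_⟩
  · intro π Vpi hfollow hend hrec
    have eqv : ∀ d h, 1 ≤ h → h + d = H → Vpi h (sstar h) = 1 / 2 := by
      intro d
      induction d with
      | zero =>
        intro h h1 hEq
        have hhH : h = H := by omega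
        subst hhH
        have hm : h ∈ Finset.Icc 1 h := Finset.mem_Icc.2 ⟨h1, le_rfl⟩
        rw [hrec h hm (sstar h), hrH, hend, hfollow h hm, hQstarpath h hm, add_zero]
      | succ d ih =>
        intro h h1 hEq
        have hlt : h < H := by omega
        have hm : h ∈ Finset.Icc 1 H := Finset.mem_Icc.2 ⟨h1, hlt.le⟩
        rw [hrec h hm (sstar h), hrlt h h1 hlt, hfollow h hm,
          ← hstar h h1 (by omega), hsup (h + 1) (by omega) (by omega),
          ih (h + 1) (by omega) (by omega), hQstarpath h hm]
        ring
    rw [hV1, eqv (H - 1) 1 le_rfl (by omega)]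
  · intro π Vpi hdev hend hrec
    have up : ∀ d h, 1 ≤ h → h + d = H → ∀ s, Vpi h s ≤ Q h s (π h s) := by
      intro d
      induction d with
      | zero =>
        intro h h1 hEq s
        have hhH : h = H := by omega
        subst hhH
        have hm : h ∈ Finset.Icc 1 h := Finset.mem_Icc.2 ⟨h1, le_rfl⟩
        rw [hrec h hm s, hrH, hend, add_zero]
      | succ d ih =>
        intro h h1 hEq s
        have hlt : h < H := by omega
        have hm : h ∈ Finset.Icc 1 H := Finset.mem_Icc.2 ⟨h1, hlt.le⟩
        rw [hrec h hm s, hrlt h h1 hlt]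
        have h2 := ih (h + 1) (by omega) (by omega) (P h s (π h s))
        have h3 := le_ciSup (Finite.bddAbove_range (Q (h + 1) (P h s (π h s))))
          (π (h + 1) (P h s (π h s)))
        linarith
    have dev : ∀ d h, 1 ≤ h → h + d = H →
        (∃ k, h ≤ k ∧ k ≤ H ∧ π k (sstar k) ≠ astar k) →
        Vpi h (sstar h) ≤ 0.005 := by
      intro d
      induction d with
      | zero =>
        intro h h1 hEq ⟨k, hk1, hk2, hkne⟩
        have hhH : h = H := by omega
        subst hhH
        have hkH : k = h := by omega
        subst hkH
        have hm : k ∈ Finset.Icc 1 k := Finset.mem_Icc.2 ⟨h1, le_rfl⟩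
        rw [hrec k hm (sstar k), hrH, hend, add_zero]
        have hb := abs_le.1 (hQsmall k hm (sstar k) (π k (sstar k)) (by simp [hkne]))
        exact hb.2
      | succ d ih =>
        intro h h1 hEq ⟨k, hk1, hk2, hkne⟩
        have hlt : h < H := by omega
        have hm : h ∈ Finset.Icc 1 H := Finset.mem_Icc.2 ⟨h1, hlt.le⟩
        by_cases hπ : π h (sstar h) = astar h
        · have hkh : h + 1 ≤ k := by
            rcases Nat.lt_or_ge h k with h' | h'
            · omega
            · exfalso; exact hkne (by rw [show k = h by omega, hπ])
          rw [hrec h hm (sstar h), hrlt h h1 hlt, hπ,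
            ← hstar h h1 (by omega), hsup (h + 1) (by omega) (by omega),
            hQstarpath h hm]
          have := ih (h + 1) (by omega) (by omega) ⟨k, hkh, hk2, hkne⟩
          linarith
        · have h2 := up (d + 1) h h1 hEq (sstar h)
          have hb := abs_le.1 (hQsmall h hm (sstar h) (π h (sstar h)) (by simp [hπ]))
          linarith [hb.2]
    obtain ⟨h0, hm0, hne0⟩ := hdev
    have hm0' := Finset.mem_Icc.1 hm0
    have hle := dev (H - 1) 1 le_rfl (by omega) ⟨h0, hm0'.1, hm0'.2, hne0⟩
    refine ⟨hle, ?_⟩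
    rw [hV1]
    norm_num at hle ⊢
    linarith
end

section
/- Let S and A be nonempty finite sets, H ≥ 1, P_h : S × A → S (h = 1,…,H) deterministic transition functions, r_h : S × A → ℝ rewards, and φ : S × A → ℝ^d a feature map. Assume linear Q*: for each h there exists θ_h ∈ ℝ^d with Q*_h(s,a) = ⟨φ(s,a), θ_h⟩ for all (s,a). For each h, let B_h ⊆ S × A be a set whose feature vectors span the linear span of {φ(s,a) : (s,a) ∈ S × A}. Suppose functions Q̂_h : S × A → ℝ (h = 1,…,H) satisfy: (i) each Q̂_h is linear in the features, i.e., Q̂_h(s,a) = ⟨φ(s,a), ŵ_h⟩ for some ŵ_h ∈ ℝ^d; and (ii) with Q̂_{H+1} ≡ 0, for every (s,a) ∈ B_h: Q̂_h(s,a) = r_h(s,a) + max_{a'∈A} Q̂_{h+1}(P_h(s,a), a'). Then Q̂_h(s,a) = Q*_h(s,a) for all h and all (s,a) ∈ S × A, and any policy π with π_h(s) ∈ argmax_{a∈A} Q̂_h(s,a) satisfies V^π_1(s) = V*_1(s) for all s ∈ S. -/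
open Matrix

lemma agree_of_span {S A : Type*} {d : ℕ} (φ : S → A → Fin d → ℝ)
    (f g : S → A → ℝ) (w θ : Fin d → ℝ)
    (hf : ∀ s a, f s a = φ s a ⬝ᵥ w) (hg : ∀ s a, g s a = φ s a ⬝ᵥ θ)
    (B : Set (S × A))
    (hspan : ∀ s a, φ s a ∈ Submodule.span ℝ ((fun p : S × A => φ p.1 p.2) '' B))
    (hB : ∀ p ∈ B, f p.1 p.2 = g p.1 p.2) : ∀ s a, f s a = g s a := by
  set L : (Fin d → ℝ) →ₗ[ℝ] ℝ :=
    { toFun := fun x => x ⬝ᵥ (w - θ)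
      map_add' := fun x y => add_dotProduct x y (w - θ)
      map_smul' := fun c x => smul_dotProduct c x (w - θ) } with hL
  have hker : Submodule.span ℝ ((fun p : S × A => φ p.1 p.2) '' B) ≤ LinearMap.ker L := by
    rw [Submodule.span_le]
    rintro x ⟨p, hp, rfl⟩
    have := hB p hp
    rw [hf, hg] at this
    simp only [SetLike.mem_coe, LinearMap.mem_ker, hL, LinearMap.coe_mk, AddHom.coe_mk,
      dotProduct_sub]
    linarith
  intro s a
  have h0 : L (φ s a) = 0 := hker (hspan s a)
  simp only [hL, LinearMap.coe_mk, AddHom.coe_mk, dotProduct_sub] at h0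
  rw [hf, hg]
  linarith

/-!
STATEMENT 11 (correctness of the generative-model algorithm, Appendix B): in a
deterministic system satisfying the linear `Q*` assumption, if for each level `h` the
features of a set `B_h ⊆ S × A` span the span of all features, and `Q̂_h` is linear in the
features and satisfies the Bellman equation on `B_h` (with `Q̂_{H+1} ≡ 0`), then
`Q̂_h = Q*_h` everywhere, and every greedy policy w.r.t. `Q̂` is optimal.
-/
theorem stmt_11 {S A : Type*} [Fintype S] [Nonempty S] [Fintype A] [Nonempty A]
    (H d : ℕ) (hH : 1 ≤ H)
    -- deterministic transition functions and rewards
    (P : ℕ → S → A → S)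
    (r : ℕ → S → A → ℝ)
    -- feature map
    (φ : S → A → Fin d → ℝ)
    -- optimal value functions of the deterministic system (S, A, P, r, H)
    (Qstar : ℕ → S → A → ℝ) (Vstar : ℕ → S → ℝ)
    (hVstarEnd : ∀ s, Vstar (H + 1) s = 0)
    (hQstar : ∀ h ∈ Finset.Icc 1 H, ∀ s a,
      Qstar h s a = r h s a + Vstar (h + 1) (P h s a))
    (hVstar : ∀ h ∈ Finset.Icc 1 H, ∀ s, Vstar h s = ⨆ a, Qstar h s a)
    -- linear Q* assumption
    (hlinQstar : ∀ h ∈ Finset.Icc 1 H, ∃ θ : Fin d → ℝ, ∀ s a, Qstar h s a = φ s a ⬝ᵥ θ)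
    -- for each level, a set whose features span the span of all features
    (B : ℕ → Set (S × A))
    (hspan : ∀ h ∈ Finset.Icc 1 H, ∀ s a,
      φ s a ∈ Submodule.span ℝ ((fun p : S × A => φ p.1 p.2) '' B h))
    -- the estimated Q functions: linear in features and Bellman-consistent on B_h
    (Qhat : ℕ → S → A → ℝ)
    (hQhatEnd : ∀ s a, Qhat (H + 1) s a = 0)
    (hQhatLin : ∀ h ∈ Finset.Icc 1 H, ∃ w : Fin d → ℝ, ∀ s a, Qhat h s a = φ s a ⬝ᵥ w)
    (hQhatBellman : ∀ h ∈ Finset.Icc 1 H, ∀ p ∈ B h,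
      Qhat h p.1 p.2 = r h p.1 p.2 + ⨆ a', Qhat (h + 1) (P h p.1 p.2) a') :
    (∀ h ∈ Finset.Icc 1 H, ∀ s a, Qhat h s a = Qstar h s a) ∧
    (∀ (π : ℕ → S → A) (Vpi : ℕ → S → ℝ),
      -- π is greedy with respect to Q̂
      (∀ h ∈ Finset.Icc 1 H, ∀ s a, Qhat h s a ≤ Qhat h s (π h s)) →
      -- Vpi is the value function of π
      (∀ s, Vpi (H + 1) s = 0) →
      (∀ h ∈ Finset.Icc 1 H, ∀ s,
        Vpi h s = r h s (π h s) + Vpi (h + 1) (P h s (π h s))) →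
      ∀ s, Vpi 1 s = Vstar 1 s) := by

  -- Part 1: Qhat = Qstar on levels 1..H, by downward induction.
  have key : ∀ n : ℕ, ∀ h, 1 ≤ h → h ≤ H → H - h ≤ n → ∀ s a, Qhat h s a = Qstar h s a := by
    intro n
    induction n with
    | zero =>
      intro h h1 h2 h3 s a
      have hh : h = H := le_antisymm h2 (by omega)
      subst hh
      have hmem : h ∈ Finset.Icc 1 h := by simp [h1]
      obtain ⟨w, hw⟩ := hQhatLin h hmem
      obtain ⟨θ, hθ⟩ := hlinQstar h hmem
      refine agree_of_span φ (Qhat h) (Qstar h) w θ hw hθ (B h) (hspan h hmem) ?_ s a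
      intro p hp
      rw [hQhatBellman h hmem p hp, hQstar h hmem p.1 p.2, hVstarEnd]
      congr 1
      have : ∀ a' : A, Qhat (h + 1) (P h p.1 p.2) a' = 0 := fun a' => hQhatEnd _ a'
      simp [this]
    | succ n ih =>
      intro h h1 h2 h3 s a
      have hmem : h ∈ Finset.Icc 1 H := Finset.mem_Icc.mpr ⟨h1, h2⟩
      obtain ⟨w, hw⟩ := hQhatLin h hmem
      obtain ⟨θ, hθ⟩ := hlinQstar h hmem
      refine agree_of_span φ (Qhat h) (Qstar h) w θ hw hθ (B h) (hspan h hmem) ?_ s a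
      intro p hp
      rw [hQhatBellman h hmem p hp, hQstar h hmem p.1 p.2]
      congr 1
      by_cases hhH : h = H
      · subst hhH
        rw [hVstarEnd]
        have : ∀ a' : A, Qhat (h + 1) (P h p.1 p.2) a' = 0 := fun a' => hQhatEnd _ a'
        simp [this]
      · have h2' : h + 1 ≤ H := by omega
        have hmem' : h + 1 ∈ Finset.Icc 1 H := Finset.mem_Icc.mpr ⟨by omega, h2'⟩
        rw [hVstar (h + 1) hmem']
        have : ∀ a', Qhat (h + 1) (P h p.1 p.2) a' = Qstar (h + 1) (P h p.1 p.2) a' :=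
          fun a' => ih (h + 1) (by omega) h2' (by omega) _ a'
        simp [this]
  have keyQ : ∀ h ∈ Finset.Icc 1 H, ∀ s a, Qhat h s a = Qstar h s a := by
    intro h hmem s a
    obtain ⟨h1, h2⟩ := Finset.mem_Icc.mp hmem
    exact key (H - h) h h1 h2 le_rfl s a
  refine ⟨keyQ, ?_⟩
  intro π Vpi hgreedy hVpiEnd hVpi
  have key2 : ∀ n : ℕ, ∀ h, 1 ≤ h → h ≤ H + 1 → H + 1 - h ≤ n → ∀ s, Vpi h s = Vstar h s := by
    intro n
    induction n with
    | zero =>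
      intro h h1 h2 h3 s
      have : h = H + 1 := by omega
      subst this
      rw [hVpiEnd, hVstarEnd]
    | succ n ih =>
      intro h h1 h2 h3 s
      by_cases hhH : h = H + 1
      · subst hhH; rw [hVpiEnd, hVstarEnd]
      · have h2' : h ≤ H := by omega
        have hmem : h ∈ Finset.Icc 1 H := Finset.mem_Icc.mpr ⟨h1, h2'⟩
        rw [hVpi h hmem s, ih (h + 1) (by omega) (by omega) (by omega),
          ← hQstar h hmem s (π h s), hVstar h hmem]
        refine le_antisymm (le_ciSup (Set.Finite.bddAbove (Set.finite_range _)) (π h s)) ?_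
        refine ciSup_le fun a => ?_
        have := hgreedy h hmem s a
        rw [keyQ h hmem s a, keyQ h hmem s (π h s)] at this
        exact this
  intro s
  exact key2 H 1 le_rfl (by omega) (by omega) s
end

section
/- Let d, K ≥ 1 and let φ_1, …, φ_K ∈ ℝ^d satisfy ‖φ_k‖_2 ≤ 1 for all k. For each k ∈ {1,…,K}, let Λ_k := I_d + Σ_{τ=1}^{k−1} φ_τ φ_τ^⊤. Then Σ_{k=1}^{K} φ_k^⊤ Λ_k^{−1} φ_k ≤ 2 d · log(1 + K/d). -/
open Matrix

private lemma aux_log_bound (u : ℝ) (h0 : 0 ≤ u) (h1 : u ≤ 1) :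
    u ≤ 2 * Real.log (1 + u) := by
  have hpos : (0:ℝ) < 1 + u := by linarith
  have h := Real.log_le_sub_one_of_pos (x := (1+u)⁻¹) (by positivity)
  rw [Real.log_inv] at h
  have hinv : (1+u) * (1+u)⁻¹ = 1 := mul_inv_cancel₀ hpos.ne'
  have ht : (0:ℝ) ≤ (1+u)⁻¹ := by positivity
  nlinarith [h, hinv, ht, mul_nonneg h0 ht]

private lemma aux_vmv_psd {d : ℕ} (u : Fin d → ℝ) : (vecMulVec u u).PosSemidef := by
  have h := Matrix.posSemidef_conjTranspose_mul_self (Matrix.replicateRow Unit u)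
  rwa [Matrix.conjTranspose_replicateRow, star_trivial, ← Matrix.vecMulVec_eq] at h

theorem stmt_12 (d K : ℕ) (hd : 1 ≤ d) (hK : 1 ≤ K)
    (φ : ℕ → Fin d → ℝ)
    (hφ : ∀ k ∈ Finset.Icc 1 K, ∑ i, φ k i ^ 2 ≤ 1)
    (Λ : ℕ → Matrix (Fin d) (Fin d) ℝ)
    (hΛ : ∀ k ∈ Finset.Icc 1 K,
      Λ k = 1 + ∑ τ ∈ Finset.Icc 1 (k - 1), vecMulVec (φ τ) (φ τ)) :
    ∑ k ∈ Finset.Icc 1 K, φ k ⬝ᵥ ((Λ k)⁻¹ *ᵥ φ k) ≤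
      2 * (d : ℝ) * Real.log (1 + (K : ℝ) / (d : ℝ)) := by
  set S : ℕ → Matrix (Fin d) (Fin d) ℝ :=
    fun k => ∑ τ ∈ Finset.Icc 1 k, vecMulVec (φ τ) (φ τ) with hS
  set M : ℕ → Matrix (Fin d) (Fin d) ℝ := fun k => 1 + S k with hM
  have hSpsd : ∀ k, (S k).PosSemidef := by
    intro k
    rw [hS]
    exact Finset.sum_induction _ _ (fun a b ha hb => ha.add hb)
      Matrix.PosSemidef.zero (fun τ _ => aux_vmv_psd (φ τ))
  have hMpd : ∀ k, (M k).PosDef :=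
    fun k => Matrix.PosDef.one.add_posSemidef (hSpsd k)
  have hstep : ∀ k, M (k+1) = M k + vecMulVec (φ (k+1)) (φ (k+1)) := by
    intro k
    simp only [hM, hS]
    rw [← Finset.insert_Icc_right_eq_Icc_add_one (by omega), Finset.sum_insert (by simp)]
    abel
  set u : ℕ → ℝ := fun k => φ k ⬝ᵥ ((M (k-1))⁻¹ *ᵥ φ k) with hu
  have hdet : ∀ k, det (M k) = ∏ τ ∈ Finset.Icc 1 k, (1 + u τ) := by
    intro k
    induction k with
    | zero => simp [hM, hS]
    | succ k ih =>
      rw [hstep k, ← Finset.insert_Icc_right_eq_Icc_add_one (by omega), Finset.prod_insert (by simp), ← ih]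
      rw [Matrix.vecMulVec_eq Unit,
        Matrix.det_add_replicateCol_mul_replicateRow (hMpd k).det_pos.ne'.isUnit,
        Matrix.det_unique (1 + Matrix.replicateRow Unit (φ (k+1)) * (M k)⁻¹ * Matrix.replicateCol Unit (φ (k+1)))]
      rw [Matrix.add_apply, Matrix.one_apply_eq, Matrix.mul_assoc,
        ← Matrix.replicateCol_mulVec, Matrix.replicateRow_mul_replicateCol_apply]
      have : u (k+1) = φ (k+1) ⬝ᵥ ((M k)⁻¹ *ᵥ φ (k+1)) := by
        simp [hu]
      rw [this]
      ring
  have hu_nonneg : ∀ k, 0 ≤ u k := by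
    intro k
    have h := ((hMpd (k-1)).inv).posSemidef.dotProduct_mulVec_nonneg (φ k)
    simpa [hu] using h
  have hu_le : ∀ k ∈ Finset.Icc 1 K, u k ≤ 1 := by
    intro k hk
    set A := M (k-1) with hA
    set x := φ k with hx
    set y := A⁻¹ *ᵥ x with hy
    have hxy : x = A *ᵥ y := by
      rw [hy, mulVec_mulVec, Matrix.mul_nonsing_inv _ (hMpd (k-1)).det_pos.ne'.isUnit,
        one_mulVec]
    have hs : 0 ≤ y ⬝ᵥ (S (k-1) *ᵥ y) := by
      have h := (hSpsd (k-1)).dotProduct_mulVec_nonneg y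
      simpa using h
    set s := S (k-1) *ᵥ y with hsv
    have hAy : A *ᵥ y = y + s := by
      rw [hA, hM]
      rw [add_mulVec, one_mulVec]
    have h1 : u k = y ⬝ᵥ y + s ⬝ᵥ y := by
      have : u k = x ⬝ᵥ y := rfl
      rw [this, hxy, hAy, add_dotProduct]
    have h2 : x ⬝ᵥ x = y ⬝ᵥ y + s ⬝ᵥ y + (y ⬝ᵥ s + s ⬝ᵥ s) := by
      rw [hxy, hAy, add_dotProduct, dotProduct_add, dotProduct_add]
      ring
    have hys : y ⬝ᵥ s = s ⬝ᵥ y := dotProduct_comm _ _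
    have hss : 0 ≤ s ⬝ᵥ s := by
      simp only [dotProduct]
      exact Finset.sum_nonneg fun i _ => mul_self_nonneg _
    have hsy : 0 ≤ s ⬝ᵥ y := by
      rw [← hys, hsv]; exact hs
    have hxx : x ⬝ᵥ x ≤ 1 := by
      have := hφ k hk
      simpa [dotProduct, pow_two, hx] using this
    have : u k ≤ x ⬝ᵥ x := by rw [h1, h2, hys]; linarith
    linarith
  have hd0 : (0:ℝ) < d := by exact_mod_cast hd
  have htr : trace (M K) ≤ (d : ℝ) + K := by
    have haux : ∀ v : Fin d → ℝ, trace (vecMulVec v v) = v ⬝ᵥ v := by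
      intro v
      rw [Matrix.vecMulVec_eq Unit, trace_replicateCol_mul_replicateRow]
    have heq : trace (M K) = (d:ℝ) + ∑ τ ∈ Finset.Icc 1 K, (φ τ ⬝ᵥ φ τ) := by
      simp only [hM, hS, trace_add, trace_one, trace_sum, Fintype.card_fin, haux]
    rw [heq]
    have hb : ∑ τ ∈ Finset.Icc 1 K, (φ τ ⬝ᵥ φ τ) ≤ (K:ℝ) := by
      calc ∑ τ ∈ Finset.Icc 1 K, (φ τ ⬝ᵥ φ τ)
          ≤ ∑ τ ∈ Finset.Icc 1 K, (1:ℝ) := by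
            refine Finset.sum_le_sum fun τ hτ => ?_
            have := hφ τ hτ
            simpa [dotProduct, pow_two] using this
        _ = (K:ℝ) := by simp [Nat.card_Icc]
    linarith
  have hev := (hMpd K).isHermitian
  have hdet_prod : det (M K) = ∏ i, hev.eigenvalues i := by
    have := hev.det_eq_prod_eigenvalues
    simpa using this
  have htr_sum : trace (M K) = ∑ i, hev.eigenvalues i := by
    simpa using hev.trace_eq_sum_eigenvalues
  have hev_nonneg : ∀ i, 0 ≤ hev.eigenvalues i := fun i =>
    (hMpd K).posSemidef.eigenvalues_nonneg i
  have hdet_nn : 0 ≤ det (M K) := (hMpd K).det_pos.le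
  have hamgm : det (M K) ≤ (trace (M K) / d) ^ d := by
    have h := Real.geom_mean_le_arith_mean_weighted Finset.univ
      (fun _ : Fin d => (d:ℝ)⁻¹) hev.eigenvalues
      (fun i _ => by positivity)
      (by
        simp only [Finset.sum_const, Finset.card_univ, Fintype.card_fin, nsmul_eq_mul]
        exact mul_inv_cancel₀ hd0.ne')
      (fun i _ => hev_nonneg i)
    have hprod : ∏ i, hev.eigenvalues i ^ ((d:ℝ)⁻¹) =
        (∏ i, hev.eigenvalues i) ^ ((d:ℝ)⁻¹) :=
      Real.finset_prod_rpow _ _ (fun i _ => hev_nonneg i) _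
    rw [hprod, ← hdet_prod] at h
    have hsum : ∑ i, (d:ℝ)⁻¹ * hev.eigenvalues i = trace (M K) / d := by
      rw [htr_sum, ← Finset.mul_sum]
      ring
    rw [hsum] at h
    have h2 := Real.rpow_le_rpow (Real.rpow_nonneg hdet_nn _) h (Nat.cast_nonneg d)
    rw [← Real.rpow_mul hdet_nn, inv_mul_cancel₀ hd0.ne', Real.rpow_one,
      Real.rpow_natCast] at h2
    exact h2
  have htrd_nonneg : (0:ℝ) ≤ trace (M K) / d := by
    refine div_nonneg ?_ hd0.le
    rw [htr_sum]
    exact Finset.sum_nonneg fun i _ => hev_nonneg i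
  have hquot : trace (M K) / d ≤ 1 + (K:ℝ)/d := by
    rw [div_le_iff₀ hd0]
    calc trace (M K) ≤ (d:ℝ) + K := htr
      _ = (1 + (K:ℝ)/d) * d := by field_simp
  have hdetb : det (M K) ≤ (1 + (K:ℝ)/d) ^ d := by
    calc det (M K) ≤ (trace (M K) / d) ^ d := hamgm
      _ ≤ (1 + (K:ℝ)/d) ^ d := pow_le_pow_left₀ htrd_nonneg hquot d
  have hlogdet : Real.log (det (M K)) ≤ (d:ℝ) * Real.log (1 + (K:ℝ)/d) := by
    calc Real.log (det (M K)) ≤ Real.log ((1 + (K:ℝ)/d) ^ d) :=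
          Real.log_le_log (hMpd K).det_pos hdetb
      _ = (d:ℝ) * Real.log (1 + (K:ℝ)/d) := by rw [Real.log_pow]
  have hsum_eq : ∑ k ∈ Finset.Icc 1 K, φ k ⬝ᵥ ((Λ k)⁻¹ *ᵥ φ k)
      = ∑ k ∈ Finset.Icc 1 K, u k := by
    refine Finset.sum_congr rfl fun k hk => ?_
    rw [hΛ k hk]
  have hlogprod : ∑ k ∈ Finset.Icc 1 K, Real.log (1 + u k) = Real.log (det (M K)) := by
    rw [hdet K, Real.log_prod]
    intro k hk
    have := hu_nonneg k
    positivity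
  calc ∑ k ∈ Finset.Icc 1 K, φ k ⬝ᵥ ((Λ k)⁻¹ *ᵥ φ k)
      = ∑ k ∈ Finset.Icc 1 K, u k := hsum_eq
    _ ≤ ∑ k ∈ Finset.Icc 1 K, 2 * Real.log (1 + u k) :=
        Finset.sum_le_sum fun k hk => aux_log_bound _ (hu_nonneg k) (hu_le k hk)
    _ = 2 * Real.log (det (M K)) := by
        rw [← Finset.mul_sum, hlogprod]
    _ ≤ 2 * ((d:ℝ) * Real.log (1 + (K:ℝ)/d)) := by linarith
    _ = 2 * (d:ℝ) * Real.log (1 + (K:ℝ)/d) := by ring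
end

section
/- Let d ≥ 1, n ≥ 0, let φ_1, …, φ_n ∈ ℝ^d and y_1, …, y_n ∈ ℝ, and set Λ := I_d + Σ_{τ=1}^{n} φ_τ φ_τ^⊤ and w := Λ^{−1} Σ_{τ=1}^{n} φ_τ y_τ. Then for every w̃ ∈ ℝ^d and every x ∈ ℝ^d: |⟨x, w⟩ − ⟨x, w̃⟩| ≤ ‖x‖_{Λ^{−1}} · ( ‖Σ_{τ=1}^{n} φ_τ (y_τ − ⟨φ_τ, w̃⟩)‖_{Λ^{−1}} + ‖w̃‖_2 ), where ‖v‖_{Λ^{−1}} := √(v^⊤ Λ^{−1} v). -/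
open Matrix

lemma vmv_mulVec {d : ℕ} (a b x : Fin d → ℝ) :
    vecMulVec a b *ᵥ x = (b ⬝ᵥ x) • a := by
  ext i
  simp [vecMulVec_apply, mulVec, dotProduct, Finset.mul_sum, mul_assoc, mul_comm,
    mul_left_comm]

lemma sum_mulVec' {d : ℕ} (s : Finset ℕ) (M : ℕ → Matrix (Fin d) (Fin d) ℝ)
    (v : Fin d → ℝ) : (∑ τ ∈ s, M τ) *ᵥ v = ∑ τ ∈ s, M τ *ᵥ v := by
  ext i
  simp only [mulVec, dotProduct, Finset.sum_apply, Matrix.sum_apply, Finset.sum_mul]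
  rw [Finset.sum_comm]

lemma dotProduct_finsum {d : ℕ} (v : Fin d → ℝ) (s : Finset ℕ) (u : ℕ → Fin d → ℝ) :
    v ⬝ᵥ (∑ τ ∈ s, u τ) = ∑ τ ∈ s, v ⬝ᵥ u τ := by
  simp only [dotProduct, Finset.sum_apply, Finset.mul_sum]
  rw [Finset.sum_comm]

open scoped MatrixOrder in
lemma psd_cauchy {d : ℕ} {A : Matrix (Fin d) (Fin d) ℝ} (hA : A.PosSemidef)
    (x u : Fin d → ℝ) :
    |x ⬝ᵥ (A *ᵥ u)| ≤ Real.sqrt (x ⬝ᵥ (A *ᵥ x)) * Real.sqrt (u ⬝ᵥ (A *ᵥ u)) := by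
  set S := CFC.sqrt A with hSdef
  have hsym : Sᵀ = S := by
    rw [← conjTranspose_eq_transpose_of_trivial]
    exact (CFC.sqrt_nonneg A).posSemidef.isHermitian
  have key : ∀ v w : Fin d → ℝ, v ⬝ᵥ (A *ᵥ w) = (S *ᵥ v) ⬝ᵥ (S *ᵥ w) := by
    intro v w
    rw [← CFC.sqrt_mul_sqrt_self A hA.nonneg, ← hSdef, ← mulVec_mulVec, dotProduct_mulVec,
      ← mulVec_transpose, hsym]
  rw [key x u, key x x, key u u]
  set p := S *ᵥ x
  set q := S *ᵥ u
  have h1 : (p ⬝ᵥ q) ^ 2 ≤ (p ⬝ᵥ p) * (q ⬝ᵥ q) := by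
    simpa [dotProduct, sq] using
      Finset.sum_mul_sq_le_sq_mul_sq Finset.univ p q
  have hp : 0 ≤ p ⬝ᵥ p := Finset.sum_nonneg fun i _ => mul_self_nonneg (p i)
  have hq : 0 ≤ q ⬝ᵥ q := Finset.sum_nonneg fun i _ => mul_self_nonneg (q i)
  calc |p ⬝ᵥ q| = Real.sqrt ((p ⬝ᵥ q) ^ 2) := (Real.sqrt_sq_eq_abs _).symm
    _ ≤ Real.sqrt ((p ⬝ᵥ p) * (q ⬝ᵥ q)) := Real.sqrt_le_sqrt h1
    _ = Real.sqrt (p ⬝ᵥ p) * Real.sqrt (q ⬝ᵥ q) := Real.sqrt_mul hp _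

/-!
STATEMENT 18 (deterministic ridge-regression prediction-error bound, Lemmas 3.2/3.3):
with `Λ = I + Σ_{τ=1}^{n} φ_τ φ_τ^⊤` and `w = Λ^{−1} Σ_{τ=1}^{n} y_τ φ_τ`, for all
`w̃, x ∈ ℝ^d`:
`|⟨x, w⟩ − ⟨x, w̃⟩| ≤ ‖x‖_{Λ^{−1}} (‖Σ_{τ=1}^{n} (y_τ − ⟨φ_τ, w̃⟩) φ_τ‖_{Λ^{−1}} + ‖w̃‖₂)`,
where `‖v‖_{Λ^{−1}} = √(v^⊤ Λ^{−1} v)` and `‖w̃‖₂ = √(w̃^⊤ w̃)`.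
-/
theorem stmt_18 (d n : ℕ) (hd : 1 ≤ d)
    (φ : ℕ → Fin d → ℝ) (y : ℕ → ℝ)
    (Λ : Matrix (Fin d) (Fin d) ℝ)
    (hΛ : Λ = 1 + ∑ τ ∈ Finset.Icc 1 n, vecMulVec (φ τ) (φ τ))
    (w : Fin d → ℝ)
    (hw : w = Λ⁻¹ *ᵥ ∑ τ ∈ Finset.Icc 1 n, y τ • φ τ)
    (wt x : Fin d → ℝ) :
    |x ⬝ᵥ w - x ⬝ᵥ wt| ≤
      Real.sqrt (x ⬝ᵥ (Λ⁻¹ *ᵥ x)) *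
        (Real.sqrt ((∑ τ ∈ Finset.Icc 1 n, (y τ - φ τ ⬝ᵥ wt) • φ τ) ⬝ᵥ
            (Λ⁻¹ *ᵥ ∑ τ ∈ Finset.Icc 1 n, (y τ - φ τ ⬝ᵥ wt) • φ τ)) +
          Real.sqrt (wt ⬝ᵥ wt)) := by
  set s : Fin d → ℝ := ∑ τ ∈ Finset.Icc 1 n, y τ • φ τ with hs
  set e : Fin d → ℝ := ∑ τ ∈ Finset.Icc 1 n, (y τ - φ τ ⬝ᵥ wt) • φ τ with he
  set T : Matrix (Fin d) (Fin d) ℝ := ∑ τ ∈ Finset.Icc 1 n, vecMulVec (φ τ) (φ τ)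
    with hT
  have hTmul : ∀ v : Fin d → ℝ,
      T *ᵥ v = ∑ τ ∈ Finset.Icc 1 n, (φ τ ⬝ᵥ v) • φ τ := fun v => by
    rw [hT, sum_mulVec']
    exact Finset.sum_congr rfl fun τ _ => vmv_mulVec _ _ _
  have hTquad : ∀ v : Fin d → ℝ, 0 ≤ v ⬝ᵥ (T *ᵥ v) := by
    intro v
    rw [hTmul, dotProduct_finsum]
    refine Finset.sum_nonneg fun τ _ => ?_
    rw [dotProduct_smul, smul_eq_mul, dotProduct_comm]
    exact mul_self_nonneg _
  have hTpsd : T.PosSemidef := by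
    refine .of_dotProduct_mulVec_nonneg (show Tᴴ = T from ?_) fun v => by simpa using hTquad v
    rw [conjTranspose_eq_transpose_of_trivial, hT, transpose_sum]
    refine Finset.sum_congr rfl fun τ _ => ?_
    ext i j; simp [vecMulVec_apply, transpose_apply, mul_comm]
  have hΛpd : Λ.PosDef := hΛ ▸ Matrix.PosDef.add_posSemidef Matrix.PosDef.one hTpsd
  have hdet : IsUnit Λ.det := (Matrix.isUnit_iff_isUnit_det Λ).mp hΛpd.isUnit
  have hinvpsd : Λ⁻¹.PosSemidef := hΛpd.inv.posSemidef
  -- key decomposition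
  have hΛwt : Λ *ᵥ wt = wt + T *ᵥ wt := by
    rw [hΛ, add_mulVec, one_mulVec]
  have hes : e = s - T *ᵥ wt := by
    rw [he, hs, hTmul, ← Finset.sum_sub_distrib]
    exact Finset.sum_congr rfl fun τ _ => (sub_smul _ _ _)
  have hdec : w - wt = Λ⁻¹ *ᵥ e - Λ⁻¹ *ᵥ wt := by
    have hwt' : Λ⁻¹ *ᵥ (Λ *ᵥ wt) = wt := by
      rw [mulVec_mulVec, nonsing_inv_mul _ hdet, one_mulVec]
    calc w - wt = Λ⁻¹ *ᵥ s - Λ⁻¹ *ᵥ (Λ *ᵥ wt) := by rw [hw, hwt', hs]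
      _ = Λ⁻¹ *ᵥ (s - Λ *ᵥ wt) := (mulVec_sub _ _ _).symm
      _ = Λ⁻¹ *ᵥ (e - wt) := by rw [hΛwt, hes]; congr 1; abel
      _ = Λ⁻¹ *ᵥ e - Λ⁻¹ *ᵥ wt := mulVec_sub _ _ _
  -- bound ‖wt‖_{Λ⁻¹} by ‖wt‖₂
  have hwtbound : wt ⬝ᵥ (Λ⁻¹ *ᵥ wt) ≤ wt ⬝ᵥ wt := by
    set u : Fin d → ℝ := Λ⁻¹ *ᵥ wt with hu
    have hΛu : Λ *ᵥ u = wt := by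
      rw [hu, mulVec_mulVec, mul_nonsing_inv _ hdet, one_mulVec]
    have h1 : wt ⬝ᵥ u = u ⬝ᵥ (Λ *ᵥ u) := by rw [hΛu, dotProduct_comm]
    have h2 : u ⬝ᵥ u ≤ u ⬝ᵥ (Λ *ᵥ u) := by
      rw [hΛ, add_mulVec, one_mulVec, dotProduct_add]
      exact le_add_of_nonneg_right (hTquad u)
    have hnn : 0 ≤ wt ⬝ᵥ u := by
      rw [h1]
      exact le_trans (Finset.sum_nonneg fun i _ => mul_self_nonneg (u i)) h2
    have hcs : (wt ⬝ᵥ u) ^ 2 ≤ (wt ⬝ᵥ wt) * (u ⬝ᵥ u) := by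
      simpa [dotProduct, sq] using
        Finset.sum_mul_sq_le_sq_mul_sq Finset.univ wt u
    have hW : 0 ≤ wt ⬝ᵥ wt := Finset.sum_nonneg fun i _ => mul_self_nonneg (wt i)
    rcases eq_or_lt_of_le hnn with h0 | h0
    · rw [← h0]; exact hW
    · have : (wt ⬝ᵥ u) ^ 2 ≤ (wt ⬝ᵥ wt) * (wt ⬝ᵥ u) := by nlinarith [h1, h2, hcs]
      nlinarith
  -- put it together
  have hxw : x ⬝ᵥ w - x ⬝ᵥ wt = x ⬝ᵥ (Λ⁻¹ *ᵥ e) - x ⬝ᵥ (Λ⁻¹ *ᵥ wt) := by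
    rw [← dotProduct_sub, ← dotProduct_sub, hdec]
  have hc1 := psd_cauchy hinvpsd x e
  have hc2 := psd_cauchy hinvpsd x wt
  have hsx : 0 ≤ Real.sqrt (x ⬝ᵥ (Λ⁻¹ *ᵥ x)) := Real.sqrt_nonneg _
  have hc2' : |x ⬝ᵥ (Λ⁻¹ *ᵥ wt)| ≤
      Real.sqrt (x ⬝ᵥ (Λ⁻¹ *ᵥ x)) * Real.sqrt (wt ⬝ᵥ wt) :=
    le_trans hc2 (mul_le_mul_of_nonneg_left (Real.sqrt_le_sqrt hwtbound) hsx)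
  calc |x ⬝ᵥ w - x ⬝ᵥ wt|
      ≤ |x ⬝ᵥ (Λ⁻¹ *ᵥ e)| + |x ⬝ᵥ (Λ⁻¹ *ᵥ wt)| := by rw [hxw]; exact abs_sub _ _
    _ ≤ Real.sqrt (x ⬝ᵥ (Λ⁻¹ *ᵥ x)) * Real.sqrt (e ⬝ᵥ (Λ⁻¹ *ᵥ e)) +
        Real.sqrt (x ⬝ᵥ (Λ⁻¹ *ᵥ x)) * Real.sqrt (wt ⬝ᵥ wt) := add_le_add hc1 hc2'
    _ = _ := by rw [mul_add]
end
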